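/- Let p be a prime with p ≡ 1 (mod 3) and G = C₃ × (Cₚ ⋊ C₃) (nonabelian semidirect product). For any generating pair (g₁,g₂) of G, either both g₁ and g₂ have order 3 and lie outside the center, or (up to swapping and replacing by g₁g₂) one of the elements involved has order 3p. -/
import Mathlib

lemma aux_zmod_pow {n : ℕ} (x : Multiplicative (ZMod n)) : x ^ n = 1 := by
  have h : x ^ n = Multiplicative.ofAdd (n • x.toAdd) := by
    rw [ofAdd_nsmul]; simp
  rw [h, nsmul_eq_mul, ZMod.natCast_self, zero_mul]; rfl

section aux
variable {p : ℕ} {φ : Multiplicative (ZMod 3) →* MulAut (Multiplicative (ZMod p))}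

lemma aux_exp (g : Multiplicative (ZMod 3) ×
    (SemidirectProduct (Multiplicative (ZMod p)) (Multiplicative (ZMod 3)) φ)) :
    g ^ (3 * p) = 1 := by
  obtain ⟨a, s⟩ := g
  have hs3 : SemidirectProduct.rightHom (s ^ 3) = 1 := by
    rw [map_pow]; exact aux_zmod_pow _
  have : s ^ 3 ∈ SemidirectProduct.inl.range := by
    rw [SemidirectProduct.range_inl_eq_ker_rightHom]; exact hs3
  obtain ⟨m, hm⟩ := this
  have hsp : s ^ (3 * p) = 1 := by
    rw [pow_mul, ← hm, ← map_pow, aux_zmod_pow, map_one]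
  have hap : a ^ (3 * p) = 1 := by
    rw [pow_mul, aux_zmod_pow, one_pow]
  rw [Prod.pow_mk, hap, hsp]; rfl

end aux

theorem stmt18 (p : ℕ) (hp : p.Prime) (hmod : p % 3 = 1)
    (φ : Multiplicative (ZMod 3) →* MulAut (Multiplicative (ZMod p)))
    (hφ : Function.Injective φ)
    (g₁ g₂ : Multiplicative (ZMod 3) ×
      (SemidirectProduct (Multiplicative (ZMod p)) (Multiplicative (ZMod 3)) φ))
    (hgen : Subgroup.closure {g₁, g₂} = ⊤) :
    (orderOf g₁ = 3 ∧ orderOf g₂ = 3 ∧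
      g₁ ∉ Subgroup.center _ ∧ g₂ ∉ Subgroup.center _) ∨
    (3 * p = orderOf g₁ ∨ 3 * p = orderOf g₂ ∨ 3 * p = orderOf (g₁ * g₂)) := by
  by_cases h3p : 3 * p = orderOf g₁ ∨ 3 * p = orderOf g₂ ∨ 3 * p = orderOf (g₁ * g₂)
  · exact Or.inr h3p
  push_neg at h3p
  obtain ⟨hne1, hne2, _⟩ := h3p
  left
  -- the projection to C3 × C3
  set π : (Multiplicative (ZMod 3) ×
      (SemidirectProduct (Multiplicative (ZMod p)) (Multiplicative (ZMod 3)) φ)) →*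
      Multiplicative (ZMod 3) × Multiplicative (ZMod 3) :=
    MonoidHom.prodMap (MonoidHom.id _) SemidirectProduct.rightHom with hπ
  have hπsurj : Function.Surjective π := by
    intro ⟨a, b⟩
    exact ⟨(a, SemidirectProduct.inr b), by simp [hπ]⟩
  have himg : Subgroup.closure {π g₁, π g₂} = ⊤ := by
    have := MonoidHom.map_closure π {g₁, g₂}
    rw [hgen, Set.image_insert_eq, Set.image_singleton] at this
    rw [← this]
    exact Subgroup.map_top_of_surjective π hπsurj
  -- no element of C3 × C3 generates it
  have hnogen : ∀ x : Multiplicative (ZMod 3) × Multiplicative (ZMod 3),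
      Subgroup.zpowers x ≠ ⊤ := by
    intro x hx
    have hall : ∀ y, y ∈ Subgroup.zpowers x := fun y => hx ▸ Subgroup.mem_top y
    have h9 : orderOf x = 9 := by
      rw [orderOf_eq_card_of_forall_mem_zpowers hall]
      simp [Nat.card_prod, Nat.card_zmod]
    have h3 : x ^ (3:ℕ) = 1 := by
      obtain ⟨a, b⟩ := x
      rw [Prod.pow_mk, aux_zmod_pow, aux_zmod_pow]; rfl
    have := orderOf_dvd_of_pow_eq_one h3
    rw [h9] at this
    norm_num at this
  -- π gᵢ ≠ 1
  have hπne : ∀ g : Multiplicative (ZMod 3) × Multiplicative (ZMod 3),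
      ∀ g' , Subgroup.closure {g, g'} = ⊤ → g ≠ 1 := by
    intro g g' hcl hg1
    apply hnogen g'
    rw [eq_top_iff, ← hcl]
    apply Subgroup.closure_le _ |>.2
    rintro x (rfl | rfl)
    · rw [hg1]; exact Subgroup.one_mem _
    · exact Subgroup.mem_zpowers _
  have hπ1 : π g₁ ≠ 1 := hπne _ (π g₂) himg
  have hπ2 : π g₂ ≠ 1 := by
    refine hπne _ (π g₁) ?_
    rw [← himg, Set.pair_comm]
  -- order determination
  have horder : ∀ g, π g ≠ 1 → 3 * p ≠ orderOf g → orderOf g = 3 := by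
    intro g hne hne3p
    have hdvd : orderOf g ∣ 3 * p := orderOf_dvd_of_pow_eq_one (aux_exp g)
    have h3dvd : 3 ∣ orderOf g := by
      have hd := orderOf_map_dvd π g
      have hcube : (π g) ^ (3:ℕ) = 1 := by
        obtain ⟨a, b⟩ := π g
        rw [Prod.pow_mk, aux_zmod_pow, aux_zmod_pow]; rfl
      have hdd : orderOf (π g) ∣ 3 := orderOf_dvd_of_pow_eq_one hcube
      have := (Nat.prime_three.eq_one_or_self_of_dvd _ hdd).resolve_left ?_
      · have h33 := hd; rw [this] at h33; exact h33
      · intro h1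
        exact hne (orderOf_eq_one_iff.mp h1)
    obtain ⟨e, he⟩ := h3dvd
    have hep : e ∣ p := by
      have : 3 * e ∣ 3 * p := he ▸ hdvd
      exact (Nat.mul_dvd_mul_iff_left (by norm_num)).mp this
    rcases hp.eq_one_or_self_of_dvd e hep with h1 | h1
    · rw [he, h1]
    · exfalso; exact hne3p (by rw [he, h1])
  have ho1 : orderOf g₁ = 3 := horder g₁ hπ1 hne1
  have ho2 : orderOf g₂ = 3 := horder g₂ hπ2 hne2
  -- nonabelian
  have hnab : ∃ x y : Multiplicative (ZMod 3) ×
      (SemidirectProduct (Multiplicative (ZMod p)) (Multiplicative (ZMod 3)) φ),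
      x * y ≠ y * x := by
    set b : Multiplicative (ZMod 3) := Multiplicative.ofAdd 1 with hb
    have hbne : b ≠ 1 := by decide
    have hφb : φ b ≠ 1 := fun h => hbne (hφ (by rw [h, map_one]))
    have : ∃ n : Multiplicative (ZMod p), φ b n ≠ n := by
      by_contra hc
      push_neg at hc
      refine hφb ?_
      ext n
      simpa using hc n
    obtain ⟨n, hn⟩ := this
    refine ⟨(1, SemidirectProduct.inl n), (1, SemidirectProduct.inr b), ?_⟩
    intro heq
    apply hn
    have := congrArg (fun z => z.2.left) heq
    simpa [SemidirectProduct.mul_left] using this.symm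
  -- centrality
  have hcent : ∀ g g' , Subgroup.closure {g, g'} = ⊤ →
      g ∉ Subgroup.center (Multiplicative (ZMod 3) ×
        (SemidirectProduct (Multiplicative (ZMod p)) (Multiplicative (ZMod 3)) φ)) := by
    intro g g' hcl hg
    have hg'c : g' ∈ Subgroup.center _ := by
      rw [Subgroup.mem_center_iff]
      intro x
      have hx : x ∈ Subgroup.centralizer {g'} := by
        have : Subgroup.closure {g, g'} ≤ Subgroup.centralizer {g'} := by
          apply Subgroup.closure_le _ |>.2
          rintro y (rfl | rfl)
          · refine Subgroup.mem_centralizer_iff.mpr ?_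
            intro h hh
            rw [Set.mem_singleton_iff] at hh; subst hh
            exact Subgroup.mem_center_iff.mp hg h
          · refine Subgroup.mem_centralizer_iff.mpr ?_
            intro h hh
            rw [Set.mem_singleton_iff] at hh; subst hh
            rfl
        exact this (hcl ▸ Subgroup.mem_top x)
      exact (Subgroup.mem_centralizer_iff.mp hx g' (Set.mem_singleton _)).symm
    obtain ⟨x, y, hxy⟩ := hnab
    apply hxy
    have hall : ∀ z, z ∈ Subgroup.center (Multiplicative (ZMod 3) ×
        (SemidirectProduct (Multiplicative (ZMod p)) (Multiplicative (ZMod 3)) φ)) := by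
      intro z
      have : Subgroup.closure {g, g'} ≤ Subgroup.center _ := by
        apply Subgroup.closure_le _ |>.2
        rintro y₀ (rfl | rfl)
        · exact hg
        · exact hg'c
      exact this (hcl ▸ Subgroup.mem_top z)
    exact (Subgroup.mem_center_iff.mp (hall y) x)
  refine ⟨ho1, ho2, hcent g₁ g₂ hgen, hcent g₂ g₁ ?_⟩
  rw [← hgen, Set.pair_comm]
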